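/- Let φ ∈ Δ = ℂ⁴ be a unit spinor, y the unique unit vector in ℝ⁵ with y·φ = iφ, and D_φ = {x ∈ ℝ⁵ : ⟨x,y⟩ = 0}. Then V_φ = D_φ·φ = {x·φ : x ∈ D_φ} is a complex subspace of Δ of complex dimension 2. -/

import Mathlib

open Complex Matrix Finset

/-- The explicit matrices giving the Clifford action of the basis vectors e₁,…,e₅ of ℝ⁵ on Δ = ℂ⁴. -/
noncomputable def cl : Fin 5 → Matrix (Fin 4) (Fin 4) ℂ :=
  ![!![0,0,0,I; 0,0,I,0; 0,I,0,0; I,0,0,0],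
    !![0,0,0,-1; 0,0,1,0; 0,-1,0,0; 1,0,0,0],
    !![0,0,-I,0; 0,0,0,I; -I,0,0,0; 0,I,0,0],
    !![0,0,1,0; 0,0,0,1; -1,0,0,0; 0,-1,0,0],
    !![I,0,0,0; 0,I,0,0; 0,0,-I,0; 0,0,0,-I]]

/-- Clifford multiplication of a vector x ∈ ℝ⁵ with a spinor φ ∈ Δ = ℂ⁴. -/
noncomputable def act (x : Fin 5 → ℝ) (φ : Fin 4 → ℂ) : Fin 4 → ℂ :=
  ∑ i, x i • (cl i).mulVec φ

/-- The standard Hermitian product on Δ = ℂ⁴ (antilinear in the first argument). -/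
noncomputable def herm (φ ψ : Fin 4 → ℂ) : ℂ := ∑ i, starRingEnd ℂ (φ i) * ψ i

/- ### Auxiliary material -/

theorem mul_fin_four' {α} [NonUnitalNonAssocSemiring α]
    (a₁₁ a₁₂ a₁₃ a₁₄ a₂₁ a₂₂ a₂₃ a₂₄ a₃₁ a₃₂ a₃₃ a₃₄ a₄₁ a₄₂ a₄₃ a₄₄
     b₁₁ b₁₂ b₁₃ b₁₄ b₂₁ b₂₂ b₂₃ b₂₄ b₃₁ b₃₂ b₃₃ b₃₄ b₄₁ b₄₂ b₄₃ b₄₄ : α) :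
    !![a₁₁, a₁₂, a₁₃, a₁₄; a₂₁, a₂₂, a₂₃, a₂₄; a₃₁, a₃₂, a₃₃, a₃₄; a₄₁, a₄₂, a₄₃, a₄₄] *
    !![b₁₁, b₁₂, b₁₃, b₁₄; b₂₁, b₂₂, b₂₃, b₂₄; b₃₁, b₃₂, b₃₃, b₃₄; b₄₁, b₄₂, b₄₃, b₄₄] =
    !![a₁₁*b₁₁ + a₁₂*b₂₁ + a₁₃*b₃₁ + a₁₄*b₄₁, a₁₁*b₁₂ + a₁₂*b₂₂ + a₁₃*b₃₂ + a₁₄*b₄₂,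
       a₁₁*b₁₃ + a₁₂*b₂₃ + a₁₃*b₃₃ + a₁₄*b₄₃, a₁₁*b₁₄ + a₁₂*b₂₄ + a₁₃*b₃₄ + a₁₄*b₄₄;
       a₂₁*b₁₁ + a₂₂*b₂₁ + a₂₃*b₃₁ + a₂₄*b₄₁, a₂₁*b₁₂ + a₂₂*b₂₂ + a₂₃*b₃₂ + a₂₄*b₄₂,
       a₂₁*b₁₃ + a₂₂*b₂₃ + a₂₃*b₃₃ + a₂₄*b₄₃, a₂₁*b₁₄ + a₂₂*b₂₄ + a₂₃*b₃₄ + a₂₄*b₄₄;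
       a₃₁*b₁₁ + a₃₂*b₂₁ + a₃₃*b₃₁ + a₃₄*b₄₁, a₃₁*b₁₂ + a₃₂*b₂₂ + a₃₃*b₃₂ + a₃₄*b₄₂,
       a₃₁*b₁₃ + a₃₂*b₂₃ + a₃₃*b₃₃ + a₃₄*b₄₃, a₃₁*b₁₄ + a₃₂*b₂₄ + a₃₃*b₃₄ + a₃₄*b₄₄;
       a₄₁*b₁₁ + a₄₂*b₂₁ + a₄₃*b₃₁ + a₄₄*b₄₁, a₄₁*b₁₂ + a₄₂*b₂₂ + a₄₃*b₃₂ + a₄₄*b₄₂,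
       a₄₁*b₁₃ + a₄₂*b₂₃ + a₄₃*b₃₃ + a₄₄*b₄₃, a₄₁*b₁₄ + a₄₂*b₂₄ + a₄₃*b₃₄ + a₄₄*b₄₄] := by
  ext i j
  fin_cases i <;> fin_cases j
    <;> simp [Matrix.mul_apply, Fin.sum_univ_succ, ← add_assoc]

lemma one_fin_four' : (1 : Matrix (Fin 4) (Fin 4) ℂ) = !![1,0,0,0; 0,1,0,0; 0,0,1,0; 0,0,0,1] := by
  ext i j; fin_cases i <;> fin_cases j <;> rfl

lemma zero_lit : !![(0:ℂ),0,0,0; 0,0,0,0; 0,0,0,0; 0,0,0,0] = 0 := by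
  ext i j; fin_cases i <;> fin_cases j <;> rfl

lemma neg2_lit : !![(-2:ℂ),0,0,0; 0,-2,0,0; 0,0,-2,0; 0,0,0,-2] = -((2:ℂ) • 1) := by
  rw [one_fin_four']; norm_num [Matrix.smul_cons, Matrix.smul_empty]

lemma neg1_lit : !![(-1:ℂ),0,0,0; 0,-1,0,0; 0,0,-1,0; 0,0,0,-1] = -1 := by
  rw [show (1 : Matrix (Fin 4) (Fin 4) ℂ) = !![1,0,0,0; 0,1,0,0; 0,0,1,0; 0,0,0,1] from
    one_fin_four']
  norm_num

set_option maxHeartbeats 1000000 in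
lemma clrel (i j : Fin 5) :
    cl i * cl j + cl j * cl i = (if i = j then (-2:ℂ) else 0) • 1 := by
  fin_cases i <;> fin_cases j <;>
    norm_num [cl, mul_fin_four', Complex.ext_iff, Complex.I_mul_I,
      Matrix.smul_cons, Matrix.smul_empty, zero_lit, neg2_lit, Fin.ext_iff]

/-- The matrix of Clifford multiplication by `x`. -/
noncomputable def Mv (x : Fin 5 → ℝ) : Matrix (Fin 4) (Fin 4) ℂ := ∑ i, (x i : ℂ) • cl i

lemma act_eq (x : Fin 5 → ℝ) (φ : Fin 4 → ℂ) : act x φ = (Mv x).mulVec φ := by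
  funext j
  simp only [act, Mv, Finset.sum_apply, Pi.smul_apply, Matrix.mulVec, dotProduct,
    Matrix.sum_apply, Matrix.smul_apply, Finset.sum_mul, smul_eq_mul]
  rw [Finset.sum_comm]
  refine Finset.sum_congr rfl fun i _ => ?_
  rw [Finset.smul_sum]
  refine Finset.sum_congr rfl fun k _ => ?_
  rw [Complex.real_smul, mul_assoc]

lemma Mv_mul_add (x z : Fin 5 → ℝ) :
    Mv x * Mv z + Mv z * Mv x = ((-2 : ℂ) * ∑ i, (x i : ℂ) * (z i : ℂ)) • 1 := by
  have expand : ∀ a b : Fin 5 → ℝ,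
      Mv a * Mv b = ∑ i, ∑ j, ((a i : ℂ) * (b j : ℂ)) • (cl i * cl j) := by
    intro a b
    rw [Mv, Mv, Finset.sum_mul]
    refine Finset.sum_congr rfl fun i _ => ?_
    rw [Finset.mul_sum]
    refine Finset.sum_congr rfl fun j _ => ?_
    rw [smul_mul_assoc, mul_smul_comm, smul_smul]
  rw [expand, expand, Finset.sum_comm (s := Finset.univ) (t := Finset.univ)
    (f := fun i j => ((z i : ℂ) * (x j : ℂ)) • (cl i * cl j)), ← Finset.sum_add_distrib]
  have key : ∀ i : Fin 5, (∑ j, ((x i : ℂ) * (z j : ℂ)) • (cl i * cl j)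
      + ∑ j, ((z j : ℂ) * (x i : ℂ)) • (cl j * cl i))
      = ∑ j, ((x i : ℂ) * (z j : ℂ)) • (cl i * cl j + cl j * cl i) := by
    intro i
    rw [← Finset.sum_add_distrib]
    refine Finset.sum_congr rfl fun j _ => ?_
    rw [smul_add, mul_comm ((z j : ℂ))]
  simp only [key, clrel]
  rw [Finset.mul_sum, Finset.sum_smul]
  refine Finset.sum_congr rfl fun i _ => ?_
  rw [Finset.sum_eq_single i]
  · simp [smul_smul, mul_comm]
  · intro j _ hji
    simp [Ne.symm hji]
  · simp

lemma Mv_sq (x : Fin 5 → ℝ) :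
    Mv x * Mv x = (-(∑ i, ((x i : ℂ))^2)) • 1 := by
  have h := Mv_mul_add x x
  have hs : ∑ i, (x i:ℂ) * (x i:ℂ) = ∑ i, ((x i:ℂ))^2 :=
    Finset.sum_congr rfl fun i _ => (sq ((x i:ℂ))).symm
  have h2 : (2:ℂ) • (Mv x * Mv x) = (2:ℂ) • ((-(∑ i, ((x i : ℂ))^2)) • 1) := by
    rw [two_smul, h, hs, smul_smul]
    congr 1
    ring
  exact smul_right_injective _ (two_ne_zero) h2

/-- The quaternionic structure matrix. -/
noncomputable def Bq : Matrix (Fin 4) (Fin 4) ℂ := !![0,1,0,0; -1,0,0,0; 0,0,0,-1; 0,0,1,0]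

lemma Bq_conj (j k : Fin 4) : (starRingEnd ℂ) (Bq j k) = Bq j k := by
  fin_cases j <;> fin_cases k <;>
    simp [Bq, Matrix.vecHead, Matrix.vecTail, Matrix.cons_val_zero, Matrix.cons_val_one]

lemma Bq_sq : Bq * Bq = -1 := by
  rw [Bq, mul_fin_four', ← neg1_lit]
  norm_num

lemma cl_mul_Bq (i : Fin 5) : cl i * Bq = -(Bq * (cl i).map (starRingEnd ℂ)) := by
  have m0 : (cl 0).map (starRingEnd ℂ) = !![0,0,0,-I; 0,0,-I,0; 0,-I,0,0; -I,0,0,0] := by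
    ext a b; fin_cases a <;> fin_cases b <;> simp [cl, Matrix.map_apply, Matrix.vecHead, Matrix.vecTail]
  have m1 : (cl 1).map (starRingEnd ℂ) = !![0,0,0,-1; 0,0,1,0; 0,-1,0,0; 1,0,0,0] := by
    ext a b; fin_cases a <;> fin_cases b <;> simp [cl, Matrix.map_apply, Matrix.vecHead, Matrix.vecTail]
  have m2 : (cl 2).map (starRingEnd ℂ) = !![0,0,I,0; 0,0,0,-I; I,0,0,0; 0,-I,0,0] := by
    ext a b; fin_cases a <;> fin_cases b <;> simp [cl, Matrix.map_apply, Matrix.vecHead, Matrix.vecTail]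
  have m3 : (cl 3).map (starRingEnd ℂ) = !![0,0,1,0; 0,0,0,1; -1,0,0,0; 0,-1,0,0] := by
    ext a b; fin_cases a <;> fin_cases b <;> simp [cl, Matrix.map_apply, Matrix.vecHead, Matrix.vecTail]
  have m4 : (cl 4).map (starRingEnd ℂ) = !![-I,0,0,0; 0,-I,0,0; 0,0,I,0; 0,0,0,I] := by
    ext a b; fin_cases a <;> fin_cases b <;> simp [cl, Matrix.map_apply, Matrix.vecHead, Matrix.vecTail]
  fin_cases i <;>
    [rw [show cl (⟨0, by omega⟩ : Fin 5) = cl 0 from rfl, m0];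
     rw [show cl (⟨1, by omega⟩ : Fin 5) = cl 1 from rfl, m1];
     rw [show cl (⟨2, by omega⟩ : Fin 5) = cl 2 from rfl, m2];
     rw [show cl (⟨3, by omega⟩ : Fin 5) = cl 3 from rfl, m3];
     rw [show cl (⟨4, by omega⟩ : Fin 5) = cl 4 from rfl, m4]] <;>
  · norm_num [cl, Bq, mul_fin_four', Complex.ext_iff, Matrix.cons_val_four, Matrix.cons_val_three,
      Matrix.cons_val_two, Matrix.vecHead, Matrix.vecTail]

lemma Mv_addv (a b : Fin 5 → ℝ) : Mv (a + b) = Mv a + Mv b := by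
  simp only [Mv]
  rw [← Finset.sum_add_distrib]
  refine Finset.sum_congr rfl fun i _ => ?_
  rw [← add_smul]
  norm_num

lemma Mv_smulv (c : ℝ) (a : Fin 5 → ℝ) : Mv (c • a) = (c : ℂ) • Mv a := by
  simp only [Mv, Finset.smul_sum]
  refine Finset.sum_congr rfl fun i _ => ?_
  rw [smul_smul]
  norm_num

/-- Clifford multiplication by vectors, as a real-linear map into the spinors. -/
noncomputable def Tmap (φ : Fin 4 → ℂ) : (Fin 5 → ℝ) →ₗ[ℝ] (Fin 4 → ℂ) where
  toFun x := (Mv x).mulVec φ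
  map_add' a b := by rw [Mv_addv, Matrix.add_mulVec]
  map_smul' c a := by
    rw [Mv_smulv, Matrix.smul_mulVec, RingHom.id_apply]
    funext j
    simp [Complex.real_smul]

/-- The linear functional ⟨·, y⟩. -/
noncomputable def fel (y : Fin 5 → ℝ) : (Fin 5 → ℝ) →ₗ[ℝ] ℝ where
  toFun x := ∑ i, x i * y i
  map_add' a b := by
    simp only [Pi.add_apply, add_mul]
    rw [Finset.sum_add_distrib]
  map_smul' c a := by
    simp only [Pi.smul_apply, smul_eq_mul, RingHom.id_apply]
    rw [Finset.mul_sum]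
    exact Finset.sum_congr rfl fun i _ => (mul_assoc _ _ _)

theorem stmt4 (φ : Fin 4 → ℂ) (hφ : herm φ φ = 1) (y : Fin 5 → ℝ)
    (hy : act y φ = Complex.I • φ) (hyn : ∑ i, (y i)^2 = 1) :
    ∃ V : Submodule ℂ (Fin 4 → ℂ),
      (V : Set (Fin 4 → ℂ)) = {ψ | ∃ x : Fin 5 → ℝ, (∑ i, x i * y i = 0) ∧ act x φ = ψ} ∧
      Module.finrank ℂ V = 2 := by
  classical
  have hy' : (Mv y).mulVec φ = Complex.I • φ := by rw [← act_eq]; exact hy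
  have hφ0 : φ ≠ 0 := by
    intro h
    rw [h] at hφ
    simp [herm] at hφ
  set L : (Fin 4 → ℂ) →ₗ[ℂ] (Fin 4 → ℂ) :=
    Matrix.mulVecLin (Mv y) + Complex.I • LinearMap.id with hL
  set V : Submodule ℂ (Fin 4 → ℂ) := LinearMap.ker L with hVdef
  have hmemV : ∀ ψ, ψ ∈ V ↔ (Mv y).mulVec ψ + Complex.I • ψ = 0 := by
    intro ψ
    simp [hVdef, hL, LinearMap.mem_ker]
  have hSV : ∀ x : Fin 5 → ℝ, (∑ i, x i * y i = 0) → (Mv x).mulVec φ ∈ V := by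
    intro x hx
    have hxc : (∑ i, (x i : ℂ) * (y i : ℂ)) = 0 := by
      have h0 : ((∑ i, x i * y i : ℝ) : ℂ) = 0 := by rw [hx]; norm_num
      push_cast at h0
      exact h0
    have h := Mv_mul_add x y
    rw [hxc, mul_zero, zero_smul] at h
    have hanti : Mv y * Mv x = -(Mv x * Mv y) := by
      have h2 : Mv x * Mv y = -(Mv y * Mv x) := by rwa [add_eq_zero_iff_eq_neg] at h
      rw [h2, neg_neg]
    rw [hmemV, Matrix.mulVec_mulVec, hanti, Matrix.neg_mulVec, ← Matrix.mulVec_mulVec, hy',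
      Matrix.mulVec_smul]
    exact neg_add_cancel _
  -- the conjugate spinor
  set ψq : Fin 4 → ℂ := Bq.mulVec (fun j => (starRingEnd ℂ) (φ j)) with hψq
  have hmapMv : (Mv y).map (starRingEnd ℂ) = ∑ i, (y i : ℂ) • (cl i).map (starRingEnd ℂ) := by
    ext a b
    simp only [Matrix.map_apply, Mv, Matrix.sum_apply, Matrix.smul_apply, smul_eq_mul, map_sum,
      _root_.map_mul, Complex.conj_ofReal]
  have hMvB : Mv y * Bq = -(Bq * (Mv y).map (starRingEnd ℂ)) := by
    rw [hmapMv, Mv, Finset.sum_mul, Finset.mul_sum, ← Finset.sum_neg_distrib]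
    refine Finset.sum_congr rfl fun i _ => ?_
    rw [smul_mul_assoc, cl_mul_Bq, mul_smul_comm, smul_neg]
  have hconjvec : ((Mv y).map (starRingEnd ℂ)).mulVec (fun j => (starRingEnd ℂ) (φ j))
      = fun j => (starRingEnd ℂ) ((Mv y).mulVec φ j) := by
    funext j
    simp [Matrix.mulVec, dotProduct, Matrix.map_apply, map_sum, _root_.map_mul]
  have hψqV : (Mv y).mulVec ψq = Complex.I • ψq := by
    rw [hψq, Matrix.mulVec_mulVec, hMvB, Matrix.neg_mulVec, ← Matrix.mulVec_mulVec, hconjvec]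
    have hstep : (fun j => (starRingEnd ℂ) ((Mv y).mulVec φ j))
        = (-Complex.I) • fun j => (starRingEnd ℂ) (φ j) := by
      funext j
      rw [hy']
      simp [Complex.conj_I]
    rw [hstep, Matrix.mulVec_smul, neg_smul, neg_neg]
  have hψq0 : ψq ≠ 0 := by
    intro h
    apply hφ0
    have h2 : Bq.mulVec ψq = 0 := by rw [h, Matrix.mulVec_zero]
    rw [hψq, Matrix.mulVec_mulVec, Bq_sq, Matrix.neg_mulVec, Matrix.one_mulVec] at h2
    funext j
    have h3 := congrFun h2 j
    simp only [Pi.neg_apply, Pi.zero_apply, neg_eq_zero] at h3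
    simpa using congrArg (starRingEnd ℂ) h3
  have hconjψq : (fun j => (starRingEnd ℂ) (ψq j)) = Bq.mulVec φ := by
    funext j
    simp only [hψq, Matrix.mulVec, dotProduct, map_sum, _root_.map_mul, Bq_conj,
      Complex.conj_conj]
  -- linear independence of φ and ψq
  have hind : LinearIndependent ℂ ![φ, ψq] := by
    rw [LinearIndependent.pair_iff]
    intro s t hst
    have hstar : (starRingEnd ℂ) s • (fun j => (starRingEnd ℂ) (φ j))
        + (starRingEnd ℂ) t • Bq.mulVec φ = 0 := by
      rw [← hconjψq]
      funext j
      have h4 := congrArg (starRingEnd ℂ) (congrFun hst j)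
      simpa [map_add, _root_.map_mul] using h4
    have h3 : (starRingEnd ℂ) s • ψq - (starRingEnd ℂ) t • φ = 0 := by
      have h5 := congrArg Bq.mulVec hstar
      rw [Matrix.mulVec_add, Matrix.mulVec_smul, Matrix.mulVec_smul, Matrix.mulVec_mulVec,
        Bq_sq, Matrix.neg_mulVec, Matrix.one_mulVec, Matrix.mulVec_zero, ← hψq] at h5
      rw [sub_eq_add_neg, ← smul_neg]
      exact h5
    have key : (s * (starRingEnd ℂ) s + t * (starRingEnd ℂ) t) • φ
        = (starRingEnd ℂ) s • (s • φ + t • ψq)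
          - t • ((starRingEnd ℂ) s • ψq - (starRingEnd ℂ) t • φ) := by
      module
    rw [hst, h3, smul_zero, smul_zero, sub_zero] at key
    have hzero : s * (starRingEnd ℂ) s + t * (starRingEnd ℂ) t = 0 :=
      (smul_eq_zero.mp key).resolve_right hφ0
    rw [Complex.mul_conj, Complex.mul_conj, ← Complex.ofReal_add,
      Complex.ofReal_eq_zero] at hzero
    have hns := Complex.normSq_nonneg s
    have hnt := Complex.normSq_nonneg t
    constructor
    · exact Complex.normSq_eq_zero.mp (by linarith)
    · exact Complex.normSq_eq_zero.mp (by linarith)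
  -- V has complex dimension at most 2
  have h4 : Module.finrank ℂ (Fin 4 → ℂ) = 4 := by
    simp [Module.finrank_pi]
  have hWrank : Module.finrank ℂ (Submodule.span ℂ (Set.range ![φ, ψq])) = 2 := by
    rw [finrank_span_eq_card hind]
    simp
  have hdisj : Disjoint V (Submodule.span ℂ (Set.range ![φ, ψq])) := by
    rw [Submodule.disjoint_def]
    intro v hv hw
    obtain ⟨c, rfl⟩ := (Submodule.mem_span_range_iff_exists_fun ℂ).mp hw
    rw [Fin.sum_univ_two] at hv ⊢
    simp only [Matrix.cons_val_zero, Matrix.cons_val_one, Matrix.head_cons] at hv ⊢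
    have hMv : (Mv y).mulVec (c 0 • φ + c 1 • ψq)
        = Complex.I • (c 0 • φ + c 1 • ψq) := by
      rw [Matrix.mulVec_add, Matrix.mulVec_smul, Matrix.mulVec_smul, hy', hψqV,
        smul_add, smul_comm (c 0), smul_comm (c 1)]
    rw [hmemV, hMv] at hv
    have h2I : (Complex.I + Complex.I) • (c 0 • φ + c 1 • ψq) = 0 := by
      rw [add_smul]
      exact hv
    have hIne : Complex.I + Complex.I ≠ 0 := by
      simp [Complex.ext_iff]
    exact (smul_eq_zero.mp h2I).resolve_left hIne
  have hV2 : Module.finrank ℂ V ≤ 2 := by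
    have hsum := Submodule.finrank_add_finrank_le_of_disjoint hdisj
    rw [hWrank, h4] at hsum
    omega
  -- injectivity of Clifford multiplication on vectors
  have hTinj : Function.Injective (Tmap φ) := by
    rw [← LinearMap.ker_eq_bot]
    rw [Submodule.eq_bot_iff]
    intro x hx
    rw [LinearMap.mem_ker] at hx
    have hx0 : (Mv x).mulVec φ = 0 := hx
    have h1 : (Mv x * Mv x).mulVec φ = 0 := by
      rw [← Matrix.mulVec_mulVec, hx0, Matrix.mulVec_zero]
    rw [Mv_sq, Matrix.smul_mulVec, Matrix.one_mulVec] at h1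
    have hs := (smul_eq_zero.mp h1).resolve_right hφ0
    rw [neg_eq_zero] at hs
    have hsr : ∑ i, (x i)^2 = 0 := by
      have h6 : ((∑ i, (x i)^2 : ℝ) : ℂ) = 0 := by push_cast; exact hs
      exact_mod_cast h6
    funext i
    have h7 := (Finset.sum_eq_zero_iff_of_nonneg
      (fun i _ => sq_nonneg (x i))).mp hsr i (Finset.mem_univ i)
    have : x i = 0 := by
      have := sq_eq_zero_iff.mp h7
      exact this
    simpa using this
  -- rank of the hyperplane
  have hfD : Module.finrank ℝ (LinearMap.ker (fel y)) = 4 := by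
    have hrange : LinearMap.range (fel y) = ⊤ := by
      rw [LinearMap.range_eq_top]
      intro r
      refine ⟨r • y, ?_⟩
      show ∑ i, (r • y) i * y i = r
      have hyy : ∑ i, y i * y i = 1 := by simpa [sq] using hyn
      simp only [Pi.smul_apply, smul_eq_mul, mul_assoc]
      rw [← Finset.mul_sum, hyy, mul_one]
    have hrk := LinearMap.finrank_range_add_finrank_ker (fel y)
    rw [hrange, finrank_top] at hrk
    have h5 : Module.finrank ℝ (Fin 5 → ℝ) = 5 := by simp [Module.finrank_pi]
    have hself : Module.finrank ℝ ℝ = 1 := Module.finrank_self ℝ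
    omega
  set S : Submodule ℝ (Fin 4 → ℂ) := Submodule.map (Tmap φ) (LinearMap.ker (fel y)) with hS
  have hSrank : Module.finrank ℝ S = 4 :=
    (LinearEquiv.finrank_eq
      (Submodule.equivMapOfInjective (Tmap φ) hTinj (LinearMap.ker (fel y)))).symm.trans hfD
  have hle : S ≤ Submodule.restrictScalars ℝ V := by
    rintro ψ ⟨x, hx, rfl⟩
    have hx' : ∑ i, x i * y i = 0 := hx
    exact hSV x hx'
  have hVr : Module.finrank ℝ (Submodule.restrictScalars ℝ V) = 2 * Module.finrank ℂ V := by
    have t1 := Module.finrank_mul_finrank ℝ ℂ ↥(Submodule.restrictScalars ℝ V)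
    rw [Complex.finrank_real_complex] at t1
    have t2 : Module.finrank ℂ ↥(Submodule.restrictScalars ℝ V) = Module.finrank ℂ V :=
      LinearEquiv.finrank_eq (Submodule.restrictScalarsEquiv ℝ ℂ (Fin 4 → ℂ) V)
    rw [t2] at t1
    omega
  have heq : S = Submodule.restrictScalars ℝ V :=
    Submodule.eq_of_le_of_finrank_le hle (by rw [hVr, hSrank]; omega)
  have hfr : Module.finrank ℂ V = 2 := by
    have h8 : Module.finrank ℝ (Submodule.restrictScalars ℝ V) = 4 := by
      rw [← heq]; exact hSrank
    rw [hVr] at h8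
    omega
  refine ⟨V, ?_, hfr⟩
  have hsets : (V : Set (Fin 4 → ℂ)) = (S : Set (Fin 4 → ℂ)) := by rw [heq]; rfl
  rw [hsets]
  ext ψ
  simp only [SetLike.mem_coe, hS, Submodule.mem_map, LinearMap.mem_ker, Set.mem_setOf_eq]
  constructor
  · rintro ⟨x, hx, rfl⟩
    exact ⟨x, hx, act_eq x φ⟩
  · rintro ⟨x, hx1, hx2⟩
    exact ⟨x, hx1, by rw [← hx2]; exact (act_eq x φ).symm⟩
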